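/- Let H be a complex inner product space. Equip ℝ × H with the initial topology τ determined by the family of functions consisting of (t, v) ↦ t² + ‖v‖² (with values in ℝ) together with, for each u ∈ H, the function (t, v) ↦ ⟨v, u⟩ (with values in ℂ); that is, τ is the coarsest topology making all of these functions continuous. Then for every v₀ ∈ H and every r > 0, the set B(v₀, r) = {(t, v) ∈ ℝ × H : t² + ‖v − v₀‖² < r²} is open in τ. -/

import Mathlib

/-- The initial topology on `ℝ × H` determined by the function `(t, v) ↦ t² + ‖v‖²` together
with the functions `(t, v) ↦ ⟨v, u⟩` for all `u ∈ H`. -/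
noncomputable def tauRH (H : Type*) [NormedAddCommGroup H] [InnerProductSpace ℂ H] :
    TopologicalSpace (ℝ × H) :=
  TopologicalSpace.induced (fun p : ℝ × H => p.1 ^ 2 + ‖p.2‖ ^ 2)
      (inferInstance : TopologicalSpace ℝ) ⊓
    ⨅ u : H, TopologicalSpace.induced (fun p : ℝ × H => (inner ℂ p.2 u : ℂ))
      (inferInstance : TopologicalSpace ℂ)

/-- For every `v₀ ∈ H` and `r > 0`, the set `{(t, v) : t² + ‖v − v₀‖² < r²}` is open in the
initial topology `tauRH H`. -/
theorem ball_isOpen_tauRH {H : Type*} [NormedAddCommGroup H] [InnerProductSpace ℂ H]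
    (v₀ : H) (r : ℝ) (hr : 0 < r) :
    @IsOpen (ℝ × H) (tauRH H) {p : ℝ × H | p.1 ^ 2 + ‖p.2 - v₀‖ ^ 2 < r ^ 2} := by
  letI τ := tauRH H
  have h1 : Continuous (fun p : ℝ × H => p.1 ^ 2 + ‖p.2‖ ^ 2) :=
    continuous_iff_le_induced.mpr inf_le_left
  have h2 : Continuous (fun p : ℝ × H => (inner ℂ p.2 v₀ : ℂ)) :=
    continuous_iff_le_induced.mpr (inf_le_right.trans (iInf_le _ v₀))
  have h3 : Continuous (fun p : ℝ × H =>
      (p.1 ^ 2 + ‖p.2‖ ^ 2) - 2 * (inner ℂ p.2 v₀ : ℂ).re + ‖v₀‖ ^ 2) :=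
    (h1.sub (continuous_const.mul (Complex.continuous_re.comp h2))).add continuous_const
  have hset : {p : ℝ × H | p.1 ^ 2 + ‖p.2 - v₀‖ ^ 2 < r ^ 2} =
      (fun p : ℝ × H => (p.1 ^ 2 + ‖p.2‖ ^ 2) - 2 * (inner ℂ p.2 v₀ : ℂ).re + ‖v₀‖ ^ 2) ⁻¹' Set.Iio (r ^ 2) := by
    ext p
    simp only [Set.mem_setOf_eq, Set.mem_preimage, Set.mem_Iio]
    rw [@norm_sub_sq ℂ]
    rw [show ((inner ℂ p.2 v₀ : ℂ).re) = RCLike.re (inner ℂ p.2 v₀ : ℂ) from rfl]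
    ring_nf
  rw [hset]
  exact (isOpen_Iio).preimage h3
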